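/- arXiv:1701.05483 — 7 statements merged into one kernel-verified Lean document; each statement's English description precedes it below -/
import Mathlib

section
/- Let n ≥ 1, let A be an n×n real matrix and B ∈ ℝⁿ, and let s := rank [A|B]. Then the family {B, AB, A²B, ..., A^{s−1}B} is linearly independent and spans the column space X of [A|B]; in particular it is a basis of X. -/
open Set Submodule Matrix

section Aux
variable {n : ℕ} (A : Matrix (Fin n) (Fin n) ℝ) (B : Fin n → ℝ)

private noncomputable def kv (k : ℕ) : Fin n → ℝ := (A ^ k).mulVec B

private noncomputable def KS (k : ℕ) : Submodule ℝ (Fin n → ℝ) :=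
  Submodule.span ℝ (kv A B '' Set.Iio k)

private lemma range_fin_eq (k : ℕ) :
    Set.range (fun i : Fin k => kv A B i) = kv A B '' Set.Iio k := by
  ext x
  constructor
  · rintro ⟨i, rfl⟩; exact ⟨i, i.isLt, rfl⟩
  · rintro ⟨j, hj, rfl⟩; exact ⟨⟨j, hj⟩, rfl⟩

private lemma kv_succ (k : ℕ) : kv A B (k + 1) = A.mulVec (kv A B k) := by
  simp [kv, pow_succ', Matrix.mulVec_mulVec]

private lemma prop_step {k : ℕ} (h : kv A B k ∈ KS A B k) :
    kv A B (k + 1) ∈ KS A B (k + 1) := by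
  have hmap : ⇑A.mulVecLin '' (kv A B '' Set.Iio k) ⊆ kv A B '' Set.Iio (k + 1) := by
    rintro x ⟨y, ⟨j, hj, rfl⟩, rfl⟩
    refine ⟨j + 1, by simp only [Set.mem_Iio] at hj ⊢; omega, ?_⟩
    rw [kv_succ]; simp [Matrix.mulVecLin_apply]
  have h1 : A.mulVecLin (kv A B k) ∈ (KS A B k).map A.mulVecLin :=
    Submodule.mem_map_of_mem h
  rw [KS, Submodule.map_span] at h1
  have h2 : kv A B (k+1) ∈ Submodule.span ℝ (⇑A.mulVecLin '' (kv A B '' Set.Iio k)) := by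
    rw [kv_succ]; simpa [Matrix.mulVecLin_apply] using h1
  exact Submodule.span_mono hmap h2

private lemma prop_ge {k : ℕ} (h : kv A B k ∈ KS A B k) :
    ∀ m, k ≤ m → kv A B m ∈ KS A B m := by
  intro m hm
  induction m with
  | zero => simpa [Nat.le_zero.mp hm] using h
  | succ m ih =>
    rcases Nat.lt_or_ge k (m+1) with h1 | h1
    · exact prop_step A B (ih (by omega))
    · have : k = m + 1 := by omega
      exact this ▸ h

private lemma all_in {k : ℕ} (h : kv A B k ∈ KS A B k) :
    ∀ j, kv A B j ∈ KS A B k := by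
  intro j
  induction j using Nat.strong_induction_on with
  | _ j ih =>
    rcases Nat.lt_or_ge j k with hj | hj
    · exact Submodule.subset_span ⟨j, hj, rfl⟩
    · have hjj : kv A B j ∈ KS A B j := prop_ge A B h j hj
      refine Submodule.span_le.mpr ?_ hjj
      rintro x ⟨i, hi, rfl⟩
      exact ih i hi

private lemma indep_of (k : ℕ) (h : ∀ j < k, kv A B j ∉ KS A B j) :
    LinearIndependent ℝ (fun i : Fin k => kv A B i) := by
  induction k with
  | zero => exact linearIndependent_empty_type
  | succ k ih =>
    have heq : (fun i : Fin (k+1) => kv A B i) =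
        Fin.snoc (fun i : Fin k => kv A B i) (kv A B k) := by
      funext i
      refine Fin.lastCases ?_ ?_ i
      · simp
      · intro i; simp [Fin.snoc_castSucc]
    rw [heq, linearIndependent_fin_snoc]
    refine ⟨ih (fun j hj => h j (by omega)), ?_⟩
    rw [range_fin_eq]
    exact h k (by omega)

private lemma kv_exists : ∃ k, kv A B k ∈ KS A B k := by
  by_contra hc
  push_neg at hc
  have hli : LinearIndependent ℝ (fun i : Fin (n+1) => kv A B i) :=
    indep_of A B (n+1) (fun j _ => hc j)
  have := hli.fintype_card_le_finrank
  simp only [Fintype.card_fin, Module.finrank_pi] at this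
  omega

end Aux

noncomputable def kalmanVec (n : ℕ) (A : Matrix (Fin n) (Fin n) ℝ) (B : Fin n → ℝ) :
    Matrix (Fin n) (Fin n) ℝ :=
  Matrix.of fun i j => (A ^ (j : ℕ)).mulVec B i

/-- with `s := rank [A|B]`, the family `{B, AB, ..., A^{s-1}B}` is linearly
independent and spans the column space of the Kalman matrix `[A|B]`. -/
theorem stmt0 (n : ℕ) (hn : 1 ≤ n) (A : Matrix (Fin n) (Fin n) ℝ) (B : Fin n → ℝ) :
    LinearIndependent ℝ
      (fun i : Fin (kalmanVec n A B).rank => (A ^ (i : ℕ)).mulVec B) ∧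
    Submodule.span ℝ
        (Set.range fun i : Fin (kalmanVec n A B).rank => (A ^ (i : ℕ)).mulVec B) =
      Submodule.span ℝ (Set.range fun j : Fin n => (A ^ (j : ℕ)).mulVec B) := by
  classical
  set r := Nat.find (kv_exists A B) with hr
  have hrP : kv A B r ∈ KS A B r := Nat.find_spec (kv_exists A B)
  have hrmin : ∀ j < r, kv A B j ∉ KS A B j := fun j hj => Nat.find_min _ hj
  have hli : LinearIndependent ℝ (fun i : Fin r => kv A B i) := indep_of A B r hrmin
  -- spans equal
  have hspan : Submodule.span ℝ (Set.range fun i : Fin r => kv A B i) =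
      Submodule.span ℝ (Set.range fun j : Fin n => kv A B j) := by
    rw [range_fin_eq, range_fin_eq]
    apply le_antisymm
    · -- r ≤ n? need. We know r ≤ n since indep family of size r in ℝⁿ
      have hrn : r ≤ n := by
        have := hli.fintype_card_le_finrank
        simpa [Module.finrank_pi] using this
      exact Submodule.span_mono (Set.image_mono (fun x hx => by
        simp only [Set.mem_Iio] at *; omega))
    · refine Submodule.span_le.mpr ?_
      rintro x ⟨j, hj, rfl⟩
      exact all_in A B hrP j
  -- rank = r
  have hrank : (kalmanVec n A B).rank = r := by
    have hT : (kalmanVec n A B).col = fun j : Fin n => kv A B j := by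
      funext j i; rfl
    rw [Matrix.rank_eq_finrank_span_cols, hT, ← hspan,
      finrank_span_eq_card hli, Fintype.card_fin]
  have hfun : (fun i : Fin (kalmanVec n A B).rank => (A ^ (i : ℕ)).mulVec B) =
      fun i : Fin (kalmanVec n A B).rank => kv A B i := rfl
  constructor
  · rw [hfun]
    exact hrank ▸ hli
  · rw [hfun]
    have : Submodule.span ℝ (Set.range fun i : Fin (kalmanVec n A B).rank => kv A B i) =
        Submodule.span ℝ (Set.range fun i : Fin r => kv A B i) := by rw [hrank]
    rw [this, hspan]
    rfl
end

section
/- Let n ≥ 1, let A be an n×n real matrix, B ∈ ℝⁿ, and set s := rank [A|B]. Then for every p ∈ {1,...,n}, the p×s matrix formed by the first p rows of (B|AB|...|A^{s−1}B) has the same rank as the p×n matrix formed by the first p rows of the Kalman matrix [A|B]. -/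
namespace KalmanAux

variable {n : ℕ} (A : Matrix (Fin n) (Fin n) ℝ) (B : Fin n → ℝ)

/-- Krylov subspace: span of `B, AB, ..., A^(m-1)B`. -/
noncomputable def W (m : ℕ) : Submodule ℝ (Fin n → ℝ) :=
  Submodule.span ℝ ((fun j => (A ^ j).mulVec B) '' Set.Iio m)

lemma W_mono : Monotone (W A B) := fun _ _ h =>
  Submodule.span_mono (Set.image_mono (Set.Iio_subset_Iio h))

lemma W_succ (m : ℕ) :
    W A B (m + 1) = Submodule.span ℝ {(A ^ m).mulVec B} ⊔ W A B m := by
  have : Set.Iio (m + 1) = insert m (Set.Iio m) := by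
    ext x; simp only [Set.mem_Iio, Set.mem_insert_iff]; omega
  rw [W, this, Set.image_insert_eq, Submodule.span_insert, W]

lemma mem_W_succ (m : ℕ) : (A ^ m).mulVec B ∈ W A B (m + 1) := by
  apply Submodule.subset_span
  exact ⟨m, Nat.lt_succ_self m, rfl⟩

lemma gen_mem {j m : ℕ} (h : j < m) : (A ^ j).mulVec B ∈ W A B m :=
  Submodule.subset_span ⟨j, h, rfl⟩

/-- If the chain stabilizes at `t`, then `W t` is `A`-invariant. -/
lemma A_invariant {t : ℕ} (h : W A B (t + 1) = W A B t) :
    ∀ x ∈ W A B t, A.mulVec x ∈ W A B t := by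
  intro x hx
  induction hx using Submodule.span_induction with
  | mem x hx =>
    obtain ⟨j, hj, rfl⟩ := hx
    have : A.mulVec ((A ^ j).mulVec B) = (A ^ (j + 1)).mulVec B := by
      rw [Matrix.mulVec_mulVec, pow_succ']
    rw [this, ← h]
    exact gen_mem A B (Nat.succ_lt_succ hj)
  | zero => simpa [Matrix.mulVec_zero] using (W A B t).zero_mem
  | add x y _ _ hx hy => simpa [Matrix.mulVec_add] using (W A B t).add_mem hx hy
  | smul c x _ hx => simpa [Matrix.mulVec_smul] using (W A B t).smul_mem c hx

lemma Apow_invariant {t : ℕ} (h : W A B (t + 1) = W A B t) :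
    ∀ m, ∀ x ∈ W A B t, (A ^ m).mulVec x ∈ W A B t := by
  intro m
  induction m with
  | zero => intro x hx; simpa [Matrix.one_mulVec] using hx
  | succ m ih =>
    intro x hx
    have : (A ^ (m + 1)).mulVec x = A.mulVec ((A ^ m).mulVec x) := by
      rw [Matrix.mulVec_mulVec, pow_succ']
    rw [this]
    exact A_invariant A B h _ (ih x hx)

lemma stable {t : ℕ} (h : W A B (t + 1) = W A B t) :
    ∀ m, W A B (t + m) = W A B t := by
  intro m
  induction m with
  | zero => rfl
  | succ m ih =>
    rw [← Nat.add_assoc, W_succ, ih, sup_eq_right.mpr]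
    rw [Submodule.span_le, Set.singleton_subset_iff]
    have : (A ^ (t + m)).mulVec B = (A ^ m).mulVec ((A ^ t).mulVec B) := by
      rw [Matrix.mulVec_mulVec, ← pow_add, Nat.add_comm]
    rw [this]
    exact Apow_invariant A B h m _ (h ▸ mem_W_succ A B t)

lemma finrank_ge (k : ℕ) (h : ∀ t < k, W A B (t + 1) ≠ W A B t) :
    k ≤ Module.finrank ℝ (W A B k) := by
  induction k with
  | zero => exact Nat.zero_le _
  | succ k ih =>
    have h1 : W A B k < W A B (k + 1) :=
      lt_of_le_of_ne (W_mono A B (Nat.le_succ k))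
        (fun e => h k (Nat.lt_succ_self k) e.symm)
    have := Submodule.finrank_lt_finrank_of_lt h1
    have := ih (fun t ht => h t (ht.trans (Nat.lt_succ_self k)))
    omega

/-- The key stabilization lemma: `W s = W n` where `s = finrank (W n)`. -/
lemma W_rank_eq (s : ℕ) (hs : s = Module.finrank ℝ (W A B n)) :
    W A B s = W A B n := by
  rcases Nat.lt_or_ge s n with hlt | hge
  · -- there is a stabilization point t ≤ s
    by_cases hstab : ∃ t ≤ s, W A B (t + 1) = W A B t
    · obtain ⟨t, hts, ht⟩ := hstab
      have h1 := stable A B ht (s - t)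
      have h2 := stable A B ht (n - t)
      rw [Nat.add_sub_cancel' hts] at h1
      rw [Nat.add_sub_cancel' (hts.trans hlt.le)] at h2
      rw [h1, h2]
    · push_neg at hstab
      have h1 : s + 1 ≤ Module.finrank ℝ (W A B (s + 1)) :=
        finrank_ge A B (s + 1) (fun t ht => hstab t (Nat.lt_succ_iff.mp ht))
      have h2 : Module.finrank ℝ (W A B (s + 1)) ≤ Module.finrank ℝ (W A B n) :=
        Submodule.finrank_mono (W_mono A B hlt)
      omega
  · have hsn : s ≤ n := by
      rw [hs]
      exact (Submodule.finrank_le _).trans (by simp)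
    have : s = n := le_antisymm hsn hge
    rw [this]

end KalmanAux

/-- with `s := rank [A|B]`, for every `p ∈ {1,...,n}` the `p×s` matrix formed
by the first `p` rows of `(B|AB|...|A^{s-1}B)` has the same rank as the `p×n` matrix
formed by the first `p` rows of the Kalman matrix `[A|B]`. -/
theorem stmt2 (n : ℕ) (hn : 1 ≤ n) (A : Matrix (Fin n) (Fin n) ℝ) (B : Fin n → ℝ)
    (p : ℕ) (hp : 1 ≤ p) (hpn : p ≤ n) :
    (Matrix.of fun (i : Fin p) (j : Fin (kalmanVec n A B).rank) =>
        (A ^ (j : ℕ)).mulVec B (Fin.castLE hpn i)).rank =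
    (Matrix.of fun (i : Fin p) (j : Fin n) =>
        (A ^ (j : ℕ)).mulVec B (Fin.castLE hpn i)).rank := by
  classical
  set s := (kalmanVec n A B).rank with hs
  -- projection onto the first p coordinates
  set π : (Fin n → ℝ) →ₗ[ℝ] (Fin p → ℝ) := LinearMap.funLeft ℝ ℝ (Fin.castLE hpn) with hπ
  -- columns of projected matrices
  have range_eq : ∀ m : ℕ,
      Set.range (Matrix.col (Matrix.of fun (i : Fin p) (j : Fin m) =>
        (A ^ (j : ℕ)).mulVec B (Fin.castLE hpn i))) =
      π '' ((fun j => (A ^ j).mulVec B) '' Set.Iio m) := by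
    intro m
    ext v
    constructor
    · rintro ⟨j, rfl⟩
      exact ⟨(A ^ (j : ℕ)).mulVec B, ⟨j, j.isLt, rfl⟩, rfl⟩
    · rintro ⟨x, ⟨j, hj, rfl⟩, rfl⟩
      exact ⟨⟨j, hj⟩, rfl⟩
  have hset : Set.range (kalmanVec n A B).col
      = (fun j => (A ^ j).mulVec B) '' Set.Iio n := by
    ext v
    constructor
    · rintro ⟨j, rfl⟩
      exact ⟨j, j.isLt, rfl⟩
    · rintro ⟨j, hj, rfl⟩
      exact ⟨⟨j, hj⟩, rfl⟩
  have key : KalmanAux.W A B s = KalmanAux.W A B n := by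
    apply KalmanAux.W_rank_eq
    rw [hs, Matrix.rank_eq_finrank_span_cols, hset]
    rfl
  rw [Matrix.rank_eq_finrank_span_cols, Matrix.rank_eq_finrank_span_cols,
    range_eq, range_eq, ← Submodule.map_span, ← Submodule.map_span]
  rw [show Submodule.span ℝ ((fun j => (A ^ j).mulVec B) '' Set.Iio s) = KalmanAux.W A B s from rfl,
    show Submodule.span ℝ ((fun j => (A ^ j).mulVec B) '' Set.Iio n) = KalmanAux.W A B n from rfl,
    key]
end

section
/- Let T > 0, C₁ > 0 and C₂ > 0, and let (α_{kl})_{k,l≥1} be real numbers satisfying |α_{kl}| ≤ C₁ e^{−C₂|k−l|} for all integers k, l ≥ 1. Then there exists a constant C_T > 0, depending only on T, C₁, C₂, such that for every integer k ≥ 1: Σ_{l≥1, l≠k} |e^{−k²T} − e^{−l²T}| / |l² − k²| · |α_{kl}| + T e^{−k²T} |α_{kk}| ≤ C_T e^{−C₂ k}, the series on the left-hand side being convergent. -/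
private lemma stmt11_exp_diff_le {a b : ℝ} (hab : a ≤ b) :
    Real.exp (-a) - Real.exp (-b) ≤ (b - a) * Real.exp (-a) := by
  have h1 : (-(b - a)) + 1 ≤ Real.exp (-(b - a)) := Real.add_one_le_exp _
  have h2 : Real.exp (-b) = Real.exp (-a) * Real.exp (-(b - a)) := by
    rw [← Real.exp_add]; ring_nf
  nlinarith [Real.exp_pos (-a)]

private lemma stmt11_pt_lt (T C₁ C₂ : ℝ) (hT : 0 < T) (hC₁ : 0 < C₁)
    (x y : ℝ) (hx : 1 ≤ x) (hxy : x < y) :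
    |Real.exp (-x ^ 2 * T) - Real.exp (-y ^ 2 * T)| / |y ^ 2 - x ^ 2| *
      (C₁ * Real.exp (-C₂ * |x - y|)) ≤
    T * C₁ * Real.exp (C₂ ^ 2 / T) * Real.exp (-C₂ * x) * Real.exp (-C₂ * y) := by
  have hx0 : 0 < x := lt_of_lt_of_le one_pos hx
  have hsq : x ^ 2 < y ^ 2 := by nlinarith
  have habs1 : |y ^ 2 - x ^ 2| = y ^ 2 - x ^ 2 := abs_of_pos (by linarith)
  have hord : x ^ 2 * T ≤ y ^ 2 * T := by nlinarith
  have hmono : Real.exp (-y ^ 2 * T) ≤ Real.exp (-x ^ 2 * T) :=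
    Real.exp_le_exp.mpr (by nlinarith)
  have habs2 : |Real.exp (-x ^ 2 * T) - Real.exp (-y ^ 2 * T)| =
      Real.exp (-x ^ 2 * T) - Real.exp (-y ^ 2 * T) := abs_of_nonneg (by linarith)
  have hq : |Real.exp (-x ^ 2 * T) - Real.exp (-y ^ 2 * T)| / |y ^ 2 - x ^ 2| ≤
      T * Real.exp (-x ^ 2 * T) := by
    rw [habs1, habs2, div_le_iff₀ (by linarith)]
    have := stmt11_exp_diff_le (a := x ^ 2 * T) (b := y ^ 2 * T) hord
    have h1 : Real.exp (-(x ^ 2 * T)) = Real.exp (-x ^ 2 * T) := by ring_nf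
    have h2 : Real.exp (-(y ^ 2 * T)) = Real.exp (-y ^ 2 * T) := by ring_nf
    rw [h1, h2] at this
    nlinarith
  have habs3 : |x - y| = y - x := by rw [abs_sub_comm]; exact abs_of_pos (by linarith)
  have hqnn : (0:ℝ) ≤ C₁ * Real.exp (-C₂ * |x - y|) := by positivity
  calc |Real.exp (-x ^ 2 * T) - Real.exp (-y ^ 2 * T)| / |y ^ 2 - x ^ 2| *
        (C₁ * Real.exp (-C₂ * |x - y|))
      ≤ T * Real.exp (-x ^ 2 * T) * (C₁ * Real.exp (-C₂ * |x - y|)) :=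
        mul_le_mul_of_nonneg_right hq hqnn
    _ = T * C₁ * (Real.exp (-x ^ 2 * T) * Real.exp (-C₂ * (y - x))) := by
        rw [habs3]; ring
    _ ≤ T * C₁ * Real.exp (C₂ ^ 2 / T + -C₂ * x + -C₂ * y) := by
        apply mul_le_mul_of_nonneg_left _ (by positivity)
        rw [← Real.exp_add]
        apply Real.exp_le_exp.mpr
        have key : -x ^ 2 * T + 2 * C₂ * x ≤ C₂ ^ 2 / T := by
          rw [le_div_iff₀ hT]
          nlinarith [sq_nonneg (T * x - C₂)]
        linarith
    _ = T * C₁ * Real.exp (C₂ ^ 2 / T) * Real.exp (-C₂ * x) * Real.exp (-C₂ * y) := by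
        rw [show C₂ ^ 2 / T + -C₂ * x + -C₂ * y =
          C₂ ^ 2 / T + (-C₂ * x + -C₂ * y) from by ring, Real.exp_add, Real.exp_add]
        ring

private lemma stmt11_pt (T C₁ C₂ : ℝ) (hT : 0 < T) (hC₁ : 0 < C₁)
    (x y : ℝ) (hx : 1 ≤ x) (hy : 1 ≤ y) (hxy : x ≠ y) :
    |Real.exp (-x ^ 2 * T) - Real.exp (-y ^ 2 * T)| / |y ^ 2 - x ^ 2| *
      (C₁ * Real.exp (-C₂ * |x - y|)) ≤
    T * C₁ * Real.exp (C₂ ^ 2 / T) * Real.exp (-C₂ * x) * Real.exp (-C₂ * y) := by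
  rcases lt_or_gt_of_ne hxy with h | h
  · exact stmt11_pt_lt T C₁ C₂ hT hC₁ x y hx h
  · have := stmt11_pt_lt T C₁ C₂ hT hC₁ y x hy h
    rw [abs_sub_comm (y ^ 2) (x ^ 2), abs_sub_comm x y,
      abs_sub_comm (Real.exp (-x ^ 2 * T)),
      show T * C₁ * Real.exp (C₂ ^ 2 / T) * Real.exp (-C₂ * x) * Real.exp (-C₂ * y) =
        T * C₁ * Real.exp (C₂ ^ 2 / T) * Real.exp (-C₂ * y) * Real.exp (-C₂ * x) from by ring]
    exact this

/-- if `|α_{kl}| ≤ C₁ e^{-C₂|k-l|}` then there is `C_T > 0` (depending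
only on `T, C₁, C₂`) such that for every `k ≥ 1` the series
`Σ_{l≥1, l≠k} |e^{-k²T} - e^{-l²T}|/|l²-k²| · |α_{kl}|` converges and, adding the
diagonal term `T e^{-k²T} |α_{kk}|`, the total is at most `C_T e^{-C₂ k}`. -/
theorem stmt11 (T C₁ C₂ : ℝ) (hT : 0 < T) (hC₁ : 0 < C₁) (hC₂ : 0 < C₂)
    (α : ℕ → ℕ → ℝ)
    (hα : ∀ k l : ℕ, 1 ≤ k → 1 ≤ l →
      |α k l| ≤ C₁ * Real.exp (-C₂ * |(k : ℝ) - (l : ℝ)|)) :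
    ∃ C > (0 : ℝ), ∀ k : ℕ, 1 ≤ k →
      Summable (fun l : ℕ =>
        if l = 0 ∨ l = k then 0
        else |Real.exp (-(k : ℝ) ^ 2 * T) - Real.exp (-(l : ℝ) ^ 2 * T)| /
          |(l : ℝ) ^ 2 - (k : ℝ) ^ 2| * |α k l|) ∧
      (∑' l : ℕ,
        if l = 0 ∨ l = k then 0
        else |Real.exp (-(k : ℝ) ^ 2 * T) - Real.exp (-(l : ℝ) ^ 2 * T)| /
          |(l : ℝ) ^ 2 - (k : ℝ) ^ 2| * |α k l|) +
        T * Real.exp (-(k : ℝ) ^ 2 * T) * |α k k| ≤ C * Real.exp (-C₂ * k) := by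
  set A := T * C₁ * Real.exp (C₂ ^ 2 / T) with hA_def
  have hA : 0 < A := by positivity
  set r := Real.exp (-C₂) with hr_def
  have hr0 : 0 ≤ r := le_of_lt (Real.exp_pos _)
  have hr1 : r < 1 := Real.exp_lt_one_iff.mpr (by linarith)
  have h1r : 0 < 1 - r := by linarith
  refine ⟨A / (1 - r) + A, by positivity, ?_⟩
  intro k hk
  have hk1 : (1:ℝ) ≤ (k:ℝ) := by exact_mod_cast hk
  set f : ℕ → ℝ := fun l =>
    if l = 0 ∨ l = k then 0
    else |Real.exp (-(k : ℝ) ^ 2 * T) - Real.exp (-(l : ℝ) ^ 2 * T)| /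
      |(l : ℝ) ^ 2 - (k : ℝ) ^ 2| * |α k l| with hf_def
  set g : ℕ → ℝ := fun l => A * Real.exp (-C₂ * k) * r ^ l with hg_def
  have hfnn : ∀ l, 0 ≤ f l := by
    intro l
    simp only [hf_def]
    split
    · exact le_refl 0
    · positivity
  have hle : ∀ l, f l ≤ g l := by
    intro l
    simp only [hf_def, hg_def]
    split
    · positivity
    · rename_i h
      push_neg at h
      obtain ⟨hl0, hlk⟩ := h
      have hl1 : 1 ≤ l := Nat.one_le_iff_ne_zero.mpr hl0
      have hl1' : (1:ℝ) ≤ (l:ℝ) := by exact_mod_cast hl1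
      have hne : (k:ℝ) ≠ (l:ℝ) := by
        exact_mod_cast fun h => hlk (by exact_mod_cast h.symm)
      have hrl : Real.exp (-C₂ * l) = r ^ l := by
        rw [hr_def, ← Real.exp_nat_mul]; ring_nf
      have step1 : |Real.exp (-(k : ℝ) ^ 2 * T) - Real.exp (-(l : ℝ) ^ 2 * T)| /
          |(l : ℝ) ^ 2 - (k : ℝ) ^ 2| * |α k l| ≤
          |Real.exp (-(k : ℝ) ^ 2 * T) - Real.exp (-(l : ℝ) ^ 2 * T)| /
          |(l : ℝ) ^ 2 - (k : ℝ) ^ 2| * (C₁ * Real.exp (-C₂ * |(k : ℝ) - (l : ℝ)|)) :=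
        mul_le_mul_of_nonneg_left (hα k l hk hl1) (by positivity)
      have step2 := stmt11_pt T C₁ C₂ hT hC₁ (k:ℝ) (l:ℝ) hk1 hl1' hne
      calc |Real.exp (-(k : ℝ) ^ 2 * T) - Real.exp (-(l : ℝ) ^ 2 * T)| /
            |(l : ℝ) ^ 2 - (k : ℝ) ^ 2| * |α k l|
          ≤ T * C₁ * Real.exp (C₂ ^ 2 / T) * Real.exp (-C₂ * k) * Real.exp (-C₂ * l) :=
            le_trans step1 step2
        _ = A * Real.exp (-C₂ * k) * r ^ l := by rw [← hrl, hA_def]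
  have hgsum : Summable g := by
    simpa only [hg_def] using (summable_geometric_of_lt_one hr0 hr1).mul_left
      (A * Real.exp (-C₂ * k))
  have hfsum : Summable f := Summable.of_nonneg_of_le hfnn hle hgsum
  refine ⟨hfsum, ?_⟩
  have htsum : (∑' l, f l) ≤ A * Real.exp (-C₂ * k) / (1 - r) := by
    calc (∑' l, f l) ≤ ∑' l, g l := Summable.tsum_le_tsum hle hfsum hgsum
      _ = A * Real.exp (-C₂ * k) * (1 - r)⁻¹ := by
          simp only [hg_def, tsum_mul_left, tsum_geometric_of_lt_one hr0 hr1]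
      _ = A * Real.exp (-C₂ * k) / (1 - r) := by ring
  have hdiag : T * Real.exp (-(k : ℝ) ^ 2 * T) * |α k k| ≤ A * Real.exp (-C₂ * k) := by
    have h1 : |α k k| ≤ C₁ := by
      have := hα k k hk hk
      simpa using this
    have h2 : Real.exp (-(k : ℝ) ^ 2 * T) ≤ Real.exp (C₂ ^ 2 / T) * Real.exp (-C₂ * k) := by
      rw [← Real.exp_add]
      apply Real.exp_le_exp.mpr
      have key : -(k:ℝ) ^ 2 * T + C₂ * k ≤ C₂ ^ 2 / T := by
        rw [le_div_iff₀ hT]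
        nlinarith [sq_nonneg (T * (k:ℝ) - C₂)]
      linarith
    calc T * Real.exp (-(k : ℝ) ^ 2 * T) * |α k k|
        ≤ T * Real.exp (-(k : ℝ) ^ 2 * T) * C₁ :=
          mul_le_mul_of_nonneg_left h1 (by positivity)
      _ = T * C₁ * Real.exp (-(k : ℝ) ^ 2 * T) := by ring
      _ ≤ T * C₁ * (Real.exp (C₂ ^ 2 / T) * Real.exp (-C₂ * k)) :=
          mul_le_mul_of_nonneg_left h2 (by positivity)
      _ = A * Real.exp (-C₂ * k) := by rw [hA_def]; ring
  have : (∑' l, f l) + T * Real.exp (-(k : ℝ) ^ 2 * T) * |α k k| ≤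
      A * Real.exp (-C₂ * k) / (1 - r) + A * Real.exp (-C₂ * k) := by
    linarith
  calc (∑' l, f l) + T * Real.exp (-(k : ℝ) ^ 2 * T) * |α k k|
      ≤ A * Real.exp (-C₂ * k) / (1 - r) + A * Real.exp (-C₂ * k) := this
    _ = (A / (1 - r) + A) * Real.exp (-C₂ * k) := by ring
end

section
/- Let m, G ≥ 1 be integers and T > 0. There exists a constant γ₁ > 0, independent of M, such that for every integer M ≥ 2 there exist real numbers φ₁,...,φ_m with max_{1≤i≤m} |φ_i| = 1 and ∫₀ᵀ ( Σ_{j=1}^m (GM+j) e^{−(GM+j)²(T−t)} φ_j )² dt ≤ γ₁ / M^{2m−5}. Moreover, there exist a strictly increasing sequence of integers (M_j)_{j≥1} with M_j ≥ 2, an index k₁ ∈ {1,...,m}, and for each j a corresponding tuple (φ₁^{(j)},...,φ_m^{(j)}) satisfying the above estimate with M = M_j, such that |φ_{k₁}^{(j)}| = 1 for every j. -/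
open MeasureTheory intervalIntegral Real Set Finset NNReal


lemma stmt13_aux_cauchy {F : ℂ → ℂ} (hF : Differentiable ℂ F) (n : ℕ) (c : ℂ) {r C : ℝ}
    (hr : 0 < r) (hC : ∀ z : ℂ, ‖z - c‖ = r → ‖F z‖ ≤ C) :
    ‖iteratedDeriv n F c‖ ≤ n.factorial * C / r ^ n := by
  have hC0 : 0 ≤ C := le_trans (norm_nonneg _) (hC (c + r) (by
    simp [Complex.norm_real, abs_of_pos hr]))
  set R : ℝ≥0 := ⟨r, hr.le⟩ with hR
  have hRpos : (0 : ℝ≥0) < R := by exact_mod_cast hr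
  have h := hF.hasFPowerSeriesOnBall c hRpos
  have h1 : iteratedDeriv n F c = n.factorial • (cauchyPowerSeries F c R n fun _ => (1 : ℂ)) := by
    rw [iteratedDeriv_eq_iteratedFDeriv, ← h.factorial_smul (y := (1 : ℂ)) n]
  rw [h1]
  have h2 : ‖(n.factorial : ℕ) • (cauchyPowerSeries F c R n fun _ => (1 : ℂ))‖
      ≤ n.factorial * ‖cauchyPowerSeries F c R n fun _ => (1 : ℂ)‖ := by
    rw [← Nat.cast_smul_eq_nsmul ℝ, norm_smul]
    simp
  refine h2.trans ?_
  have h3 : ‖cauchyPowerSeries F c R n fun _ => (1 : ℂ)‖ ≤ ‖cauchyPowerSeries F c R n‖ := by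
    simpa using (cauchyPowerSeries F c R n).le_opNorm fun _ => (1 : ℂ)
  have h4 := norm_cauchyPowerSeries_le F c (R : ℝ) n
  have h5 : ∫ θ : ℝ in (0 : ℝ)..2 * π, ‖F (circleMap c (R : ℝ) θ)‖ ≤ C * (2 * π) := by
    have : ∫ θ : ℝ in (0 : ℝ)..2 * π, ‖F (circleMap c (R : ℝ) θ)‖
        ≤ ∫ _ : ℝ in (0 : ℝ)..2 * π, C := by
      apply intervalIntegral.integral_mono_on Real.two_pi_pos.le
      · exact ((hF.continuous.comp (continuous_circleMap c (R : ℝ))).norm).intervalIntegrable _ _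
      · exact intervalIntegrable_const
      · intro θ _
        apply hC
        rw [circleMap_sub_center]
        simp only [norm_circleMap_zero]
        exact abs_of_pos hr
    simpa [mul_comm] using this
  have h6 : ‖cauchyPowerSeries F c R n‖ ≤ C / r ^ n := by
    refine h4.trans ?_
    have hr' : |(R : ℝ)| = r := abs_of_pos hr
    rw [hr']
    calc (2 * π)⁻¹ * (∫ θ : ℝ in (0 : ℝ)..2 * π, ‖F (circleMap c (R : ℝ) θ)‖) * r⁻¹ ^ n
        ≤ (2 * π)⁻¹ * (C * (2 * π)) * r⁻¹ ^ n := by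
          gcongr
      _ = C / r ^ n := by
          rw [inv_pow]
          field_simp
  calc (n.factorial : ℝ) * ‖cauchyPowerSeries F c R n fun _ => (1 : ℂ)‖
      ≤ (n.factorial : ℝ) * (C / r ^ n) := by
        gcongr
        exact h3.trans h6
    _ = n.factorial * C / r ^ n := by ring


lemma stmt13_iter_re : ∀ (n : ℕ) (F : ℂ → ℂ), Differentiable ℂ F → ∀ x : ℝ,
    iteratedDeriv n (fun t : ℝ => (F t).re) x = (iteratedDeriv n F x).re := by
  intro n
  induction n with
  | zero => intro F hF x; simp
  | succ n ih =>
    intro F hF x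
    rw [iteratedDeriv_succ', iteratedDeriv_succ']
    have hd : deriv (fun t : ℝ => (F t).re) = fun t : ℝ => ((deriv F) t).re := by
      funext t
      exact ((hF t).hasDerivAt.real_of_complex).deriv
    have hF' : Differentiable ℂ (deriv F) := by
      have := (Complex.analyticOnNhd_univ_iff_differentiable.mpr hF).deriv
      exact Complex.analyticOnNhd_univ_iff_differentiable.mp this
    rw [hd]
    exact ih (deriv F) hF' x

lemma stmt13_fd_bound : ∀ (n : ℕ) (g : ℝ → ℝ), (∀ k : ℕ, ContDiff ℝ k g) → ∀ (x B : ℝ),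
    (∀ ξ ∈ Set.Icc x (x + n), |iteratedDeriv n g ξ| ≤ B) →
    |∑ j ∈ Finset.range (n + 1), (-1 : ℝ) ^ j * (n.choose j) * g (x + j)| ≤ B := by
  intro n
  induction n with
  | zero =>
    intro g hg x B hB
    simpa using hB x (by simp)
  | succ n ih =>
    intro g hg x B hB
    set h : ℝ → ℝ := fun y => g y - g (y + 1) with hh
    have hgs : ∀ k : ℕ, ContDiff ℝ k fun y : ℝ => g (y + 1) := fun k =>
      (hg k).comp (contDiff_id.add contDiff_const)
    have hhc : ∀ k : ℕ, ContDiff ℝ k h := fun k => (hg k).sub (hgs k)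
    have hgd : Differentiable ℝ (iteratedDeriv n g) :=
      (hg (n + 1)).differentiable_iteratedDeriv n (by exact_mod_cast lt_add_one n)
    have hhd : ∀ ξ ∈ Set.Icc x (x + n), |iteratedDeriv n h ξ| ≤ B := by
      intro ξ hξ
      have h1 : iteratedDeriv n h ξ = iteratedDeriv n g ξ - iteratedDeriv n g (ξ + 1) := by
        have e1 : iteratedDeriv n h ξ =
            iteratedDeriv n g ξ - iteratedDeriv n (fun y : ℝ => g (y + 1)) ξ := by
          have e0 : h = g - fun y : ℝ => g (y + 1) := rfl
          rw [e0, ← iteratedDerivWithin_univ, ← iteratedDerivWithin_univ,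
            ← iteratedDerivWithin_univ]
          exact iteratedDerivWithin_sub (Set.mem_univ ξ) uniqueDiffOn_univ
            ((hg n).contDiffWithinAt) ((hgs n).contDiffWithinAt)
        rw [e1, iteratedDeriv_comp_add_const n g 1]
      obtain ⟨c, hc, hceq⟩ := exists_hasDerivAt_eq_slope (iteratedDeriv n g)
        (iteratedDeriv (n + 1) g) (lt_add_one ξ) (hgd.continuous.continuousOn)
        (fun y _ => by rw [iteratedDeriv_succ]; exact (hgd y).hasDerivAt)
      have h2 : iteratedDeriv n g (ξ + 1) - iteratedDeriv n g ξ = iteratedDeriv (n + 1) g c := by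
        rw [hceq]; simp
      rw [h1, abs_sub_comm, h2]
      apply hB
      constructor
      · exact le_trans hξ.1 hc.1.le
      · push_cast
        have := hξ.2
        have := hc.2.le
        linarith
    have rhs : ∑ j ∈ Finset.range (n + 1), (-1 : ℝ) ^ j * (n.choose j) * h (x + j)
        = (∑ j ∈ Finset.range (n + 1), (-1 : ℝ) ^ j * (n.choose j) * g (x + j))
          - ∑ j ∈ Finset.range (n + 1), (-1 : ℝ) ^ j * (n.choose j) * g (x + j + 1) := by
      rw [← Finset.sum_sub_distrib]
      apply Finset.sum_congr rfl
      intro j _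
      simp only [hh]
      ring
    have lhs : ∑ j ∈ Finset.range (n + 2), (-1 : ℝ) ^ j * ((n + 1).choose j) * g (x + j)
        = g x + ∑ j ∈ Finset.range (n + 1),
            (-1 : ℝ) ^ (j + 1) * (((n.choose j : ℝ)) + (n.choose (j + 1) : ℝ)) * g (x + j + 1) := by
      rw [Finset.sum_range_succ' _ (n + 1)]
      rw [add_comm]
      congr 1
      · simp
      · apply Finset.sum_congr rfl
        intro j _
        rw [Nat.choose_succ_succ]
        push_cast
        ring_nf
        rw [Nat.succ_eq_add_one]
        ring
    have aux : ∑ j ∈ Finset.range (n + 1), (-1 : ℝ) ^ (j + 1) * (n.choose (j + 1) : ℝ) * g (x + j + 1)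
        = (∑ j ∈ Finset.range (n + 1), (-1 : ℝ) ^ j * (n.choose j : ℝ) * g (x + j)) - g x := by
      have e2 : ∑ j ∈ Finset.range (n + 2), (-1 : ℝ) ^ j * (n.choose j : ℝ) * g (x + j)
          = (∑ j ∈ Finset.range (n + 1), (-1 : ℝ) ^ (j + 1) * (n.choose (j + 1) : ℝ) * g (x + j + 1)) + g x := by
        rw [Finset.sum_range_succ' _ (n + 1)]
        congr 1
        · apply Finset.sum_congr rfl
          intro j _
          push_cast
          ring_nf
        · simp
      have e3 : ∑ j ∈ Finset.range (n + 2), (-1 : ℝ) ^ j * (n.choose j : ℝ) * g (x + j)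
          = ∑ j ∈ Finset.range (n + 1), (-1 : ℝ) ^ j * (n.choose j : ℝ) * g (x + j) := by
        rw [Finset.sum_range_succ]
        simp [Nat.choose_succ_self]
      rw [e2] at e3
      linarith
    have comb : ∑ j ∈ Finset.range (n + 1),
          (-1 : ℝ) ^ (j + 1) * (((n.choose j : ℝ)) + (n.choose (j + 1) : ℝ)) * g (x + j + 1)
        = (-∑ j ∈ Finset.range (n + 1), (-1 : ℝ) ^ j * (n.choose j : ℝ) * g (x + j + 1))
          + ∑ j ∈ Finset.range (n + 1), (-1 : ℝ) ^ (j + 1) * (n.choose (j + 1) : ℝ) * g (x + j + 1) := by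
      rw [← Finset.sum_neg_distrib, ← Finset.sum_add_distrib]
      apply Finset.sum_congr rfl
      intro j _
      ring
    have hsum : ∑ j ∈ Finset.range (n + 1 + 1), (-1 : ℝ) ^ j * ((n + 1).choose j) * g (x + j)
        = ∑ j ∈ Finset.range (n + 1), (-1 : ℝ) ^ j * (n.choose j) * h (x + j) := by
      rw [show n + 1 + 1 = n + 2 from rfl, lhs, rhs, comb, aux]
      ring
    rw [hsum]
    exact ih h hhc x B hhd


lemma stmt13_key_bound (n : ℕ) (x s : ℝ) (hx : 1 ≤ x) (hs : 0 ≤ s) :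
    |∑ j ∈ Finset.range (n + 1), (-1 : ℝ) ^ j * (n.choose j) *
        ((x + j) * Real.exp (-(x + j) ^ 2 * s))| ≤
      (2 * n.factorial * 5 ^ n * (n + 1)) * (x / x ^ n) * Real.exp (-x ^ 2 * s / 2) := by
  set g : ℝ → ℝ := fun y => y * Real.exp (-y ^ 2 * s) with hg
  set F : ℂ → ℂ := fun z => z * Complex.exp (-z ^ 2 * (s : ℂ)) with hF
  have hFd : Differentiable ℂ F :=
    differentiable_id.mul (((differentiable_id.pow 2).neg.mul (differentiable_const _)).cexp)
  have hgF : g = fun t : ℝ => (F t).re := by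
    funext t
    simp only [hg, hF]
    have : ((-(t:ℂ) ^ 2 * (s:ℂ))) = ((-t ^ 2 * s : ℝ) : ℂ) := by push_cast; ring
    rw [this, ← Complex.ofReal_exp, ← Complex.ofReal_mul, Complex.ofReal_re]
  have hgc : ∀ k : ℕ, ContDiff ℝ k g := fun k =>
    contDiff_id.mul (((contDiff_id.pow 2).neg.mul contDiff_const).exp)
  have hx0 : 0 < x := lt_of_lt_of_le one_pos hx
  apply stmt13_fd_bound n g hgc x
  intro ξ hξ
  have hξ1 : 1 ≤ ξ := le_trans hx hξ.1
  have hξ0 : 0 < ξ := lt_of_lt_of_le one_pos hξ1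
  -- Cauchy estimate at ξ with radius ξ/5
  have hsphere : ∀ z : ℂ, ‖z - (ξ : ℂ)‖ = ξ / 5 → ‖F z‖ ≤ 2 * ξ * Real.exp (-ξ ^ 2 * s / 2) := by
    intro z hz
    have hzabs : ‖z - (ξ : ℂ)‖ = ξ / 5 := by
      exact hz
    have hre : |z.re - ξ| ≤ ξ / 5 := by
      have h1 := Complex.abs_re_le_norm (z - (ξ : ℂ))
      rw [hzabs] at h1
      simpa [Complex.sub_re] using h1
    have him : |z.im| ≤ ξ / 5 := by
      have h1 := Complex.abs_im_le_norm (z - (ξ : ℂ))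
      rw [hzabs] at h1
      simpa [Complex.sub_im] using h1
    have hnorm : ‖z‖ ≤ 2 * ξ := by
      have : ‖z‖ ≤ ‖(ξ : ℂ)‖ + ‖z - (ξ : ℂ)‖ := by
        simpa using norm_add_le ((ξ : ℂ)) (z - (ξ : ℂ))
      rw [hz] at this
      have : ‖z‖ ≤ |ξ| + ξ / 5 := by simpa [Complex.norm_real] using this
      rw [abs_of_pos hξ0] at this
      linarith
    have hre2 : (z.re) ^ 2 - (z.im) ^ 2 ≥ ξ ^ 2 / 2 := by
      have h1 : z.re ≥ ξ - ξ / 5 := by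
        have := abs_le.mp hre
        linarith [this.1]
      have h2 : z.im ^ 2 ≤ (ξ / 5) ^ 2 := by
        have := abs_le.mp him
        nlinarith [this.1, this.2]
      have h3 : z.re ≥ (4 / 5) * ξ := by linarith
      have h4 : z.re ^ 2 ≥ ((4 / 5) * ξ) ^ 2 := by nlinarith
      nlinarith
    have hexp : ‖Complex.exp (-z ^ 2 * (s : ℂ))‖ ≤ Real.exp (-ξ ^ 2 * s / 2) := by
      rw [Complex.norm_exp]
      apply Real.exp_le_exp.mpr
      have hre' : (-z ^ 2 * (s : ℂ)).re = -((z.re ^ 2 - z.im ^ 2) * s) := by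
        simp only [Complex.mul_re, Complex.neg_re, Complex.neg_im, Complex.ofReal_re,
          Complex.ofReal_im, pow_two, Complex.mul_im]
        ring
      rw [hre']
      have : ξ ^ 2 / 2 * s ≤ (z.re ^ 2 - z.im ^ 2) * s := by
        apply mul_le_mul_of_nonneg_right hre2 hs
      linarith
    calc ‖F z‖ = ‖z‖ * ‖Complex.exp (-z ^ 2 * (s : ℂ))‖ := by
          simp only [hF]; rw [norm_mul]
      _ ≤ (2 * ξ) * Real.exp (-ξ ^ 2 * s / 2) := by
          apply mul_le_mul hnorm hexp (norm_nonneg _) (by positivity)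
  have hcau := stmt13_aux_cauchy hFd n (ξ : ℂ) (by positivity : (0:ℝ) < ξ / 5) hsphere
  have hiter : |iteratedDeriv n g ξ| ≤ ‖iteratedDeriv n F (ξ : ℂ)‖ := by
    rw [hgF, stmt13_iter_re n F hFd ξ]
    exact Complex.abs_re_le_norm _
  have hstep : |iteratedDeriv n g ξ| ≤
      n.factorial * (2 * ξ * Real.exp (-ξ ^ 2 * s / 2)) / (ξ / 5) ^ n :=
    le_trans hiter hcau
  refine hstep.trans ?_
  -- compare with the bound at x
  have hξx : ξ ≤ (n + 1) * x := by
    have := hξ.2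
    have hnx : (n : ℝ) ≤ n * x := by
      nlinarith [Nat.cast_nonneg (α := ℝ) n]
    nlinarith
  have hxξ : x ^ n ≤ ξ ^ n := pow_le_pow_left₀ (by linarith) hξ.1 n
  have hexpmono : Real.exp (-ξ ^ 2 * s / 2) ≤ Real.exp (-x ^ 2 * s / 2) := by
    apply Real.exp_le_exp.mpr
    have : x ^ 2 ≤ ξ ^ 2 := by nlinarith [hξ.1]
    nlinarith
  have hξn : (0:ℝ) < ξ ^ n := by positivity
  have hxn : (0:ℝ) < x ^ n := by positivity
  have e1 : n.factorial * (2 * ξ * Real.exp (-ξ ^ 2 * s / 2)) / (ξ / 5) ^ n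
      = (2 * n.factorial * 5 ^ n) * (ξ / ξ ^ n) * Real.exp (-ξ ^ 2 * s / 2) := by
    rw [div_pow]
    field_simp
  rw [e1]
  have h2 : ξ / ξ ^ n ≤ (n + 1) * (x / x ^ n) := by
    rw [div_le_iff₀ hξn]
    have : (n + 1) * (x / x ^ n) * ξ ^ n = (n + 1) * x * (ξ ^ n / x ^ n) := by
      field_simp
    rw [this]
    have h3 : (1:ℝ) ≤ ξ ^ n / x ^ n := (one_le_div hxn).mpr hxξ
    calc ξ ≤ (n + 1) * x := hξx
      _ = (n + 1) * x * 1 := by ring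
      _ ≤ (n + 1) * x * (ξ ^ n / x ^ n) := by
          apply mul_le_mul_of_nonneg_left h3
          positivity
  calc (2 * n.factorial * 5 ^ n) * (ξ / ξ ^ n) * Real.exp (-ξ ^ 2 * s / 2)
      ≤ (2 * n.factorial * 5 ^ n) * ((n + 1) * (x / x ^ n)) * Real.exp (-x ^ 2 * s / 2) := by
        apply mul_le_mul
        · apply mul_le_mul_of_nonneg_left h2
          positivity
        · exact hexpmono
        · positivity
        · positivity
    _ = (2 * n.factorial * 5 ^ n * (n + 1)) * (x / x ^ n) * Real.exp (-x ^ 2 * s / 2) := by ring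


-- main work lemma
lemma stmt13_main_est (m G : ℕ) (hm : 1 ≤ m) (hG : 1 ≤ G) (T : ℝ) (hT : 0 < T)
    (n : ℕ) (hmn : m = n + 1) (M : ℕ) (hM : 2 ≤ M) :
    ∫ t in Set.Ioo (0 : ℝ) T,
        (∑ j : Fin m, ((G * M + (j : ℕ) + 1 : ℕ) : ℝ) *
          Real.exp (-((G * M + (j : ℕ) + 1 : ℕ) : ℝ) ^ 2 * (T - t)) *
            (((-1 : ℝ) ^ (j : ℕ) * ((n.choose (j : ℕ) : ℝ))) / (n.choose (n / 2) : ℝ))) ^ 2 ≤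
      ((2 * n.factorial * 5 ^ n * (n + 1) : ℝ) ^ 2) / (M : ℝ) ^ (2 * (m : ℤ) - 5) := by
  set Cmax : ℝ := (n.choose (n / 2) : ℝ) with hCmax
  have hC1 : 1 ≤ Cmax := by
    have h0 : 1 ≤ n.choose (n / 2) := Nat.choose_pos (Nat.div_le_self n 2)
    rw [hCmax]; exact_mod_cast h0
  set Kn : ℝ := 2 * n.factorial * 5 ^ n * (n + 1) with hKn
  have hKn0 : 0 < Kn := by positivity
  set x : ℝ := (G : ℝ) * M + 1 with hx
  have hM0 : (0 : ℝ) < M := by exact_mod_cast lt_of_lt_of_le two_pos hM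
  have hxM : (M : ℝ) ≤ x := by
    have : (1 : ℝ) ≤ (G : ℝ) := by exact_mod_cast hG
    nlinarith
  have hx1 : (1 : ℝ) ≤ x := by
    have h0 : (0 : ℝ) ≤ (G : ℝ) * M := by positivity
    rw [hx]; linarith
  set S : ℝ → ℝ := fun t => ∑ j : Fin m, ((G * M + (j : ℕ) + 1 : ℕ) : ℝ) *
      Real.exp (-((G * M + (j : ℕ) + 1 : ℕ) : ℝ) ^ 2 * (T - t)) *
        (((-1 : ℝ) ^ (j : ℕ) * ((n.choose (j : ℕ) : ℝ))) / Cmax) with hS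
  have hScont : Continuous S := by
    apply continuous_finset_sum
    intro j _
    fun_prop
  -- pointwise bound
  have hpt : ∀ t ∈ Set.Ioo (0 : ℝ) T, (S t) ^ 2 ≤
      Kn ^ 2 * (x / x ^ n) ^ 2 * Real.exp (-x ^ 2 * (T - t)) := by
    intro t ht
    have hs0 : 0 ≤ T - t := by linarith [ht.2]
    have hrepr : S t = (1 / Cmax) * ∑ j ∈ Finset.range (n + 1), (-1 : ℝ) ^ j * (n.choose j) *
        ((x + j) * Real.exp (-(x + j) ^ 2 * (T - t))) := by
      simp only [hS]
      rw [Fin.sum_univ_eq_sum_range (fun j : ℕ => ((G * M + j + 1 : ℕ) : ℝ) *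
        Real.exp (-((G * M + j + 1 : ℕ) : ℝ) ^ 2 * (T - t)) *
          (((-1 : ℝ) ^ j * ((n.choose j : ℝ))) / Cmax)) m]
      rw [hmn, Finset.mul_sum]
      apply Finset.sum_congr rfl
      intro j _
      have e : ((G * M + j + 1 : ℕ) : ℝ) = x + j := by push_cast; ring
      rw [e]
      ring
    have habs : |S t| ≤ Kn * (x / x ^ n) * Real.exp (-x ^ 2 * (T - t) / 2) := by
      rw [hrepr, abs_mul]
      have h1 := stmt13_key_bound n x (T - t) hx1 hs0
      have h2 : |1 / Cmax| ≤ 1 := by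
        rw [abs_of_pos (by positivity)]
        rw [div_le_one (by linarith)]
        linarith
      calc |1 / Cmax| * |∑ j ∈ Finset.range (n + 1), (-1 : ℝ) ^ j * (n.choose j) *
            ((x + j) * Real.exp (-(x + j) ^ 2 * (T - t)))|
          ≤ 1 * (Kn * (x / x ^ n) * Real.exp (-x ^ 2 * (T - t) / 2)) := by
            apply mul_le_mul h2 h1 (abs_nonneg _) one_pos.le
        _ = Kn * (x / x ^ n) * Real.exp (-x ^ 2 * (T - t) / 2) := one_mul _
    have hsq : (S t) ^ 2 ≤ (Kn * (x / x ^ n) * Real.exp (-x ^ 2 * (T - t) / 2)) ^ 2 := by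
      rw [← sq_abs (S t)]
      apply pow_le_pow_left₀ (abs_nonneg _) habs
    refine hsq.trans (le_of_eq ?_)
    rw [mul_pow, pow_two (Real.exp _), ← Real.exp_add]
    ring_nf
  -- integrability
  have hint1 : IntegrableOn (fun t => (S t) ^ 2) (Set.Ioo (0 : ℝ) T) :=
    ((hScont.pow 2).integrableOn_Icc).mono_set Set.Ioo_subset_Icc_self
  have hint2 : IntegrableOn (fun t => Kn ^ 2 * (x / x ^ n) ^ 2 * Real.exp (-x ^ 2 * (T - t)))
      (Set.Ioo (0 : ℝ) T) := by
    apply Continuous.integrableOn_Icc (by fun_prop) |>.mono_set Set.Ioo_subset_Icc_self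
  have hmono := setIntegral_mono_on hint1 hint2 measurableSet_Ioo hpt
  -- evaluate the bounding integral
  have hx2 : (0 : ℝ) < x ^ 2 := by positivity
  have heval : ∫ t in Set.Ioo (0 : ℝ) T, Real.exp (-x ^ 2 * (T - t)) ≤ 1 / x ^ 2 := by
    have hIoo : ∫ t in Set.Ioo (0 : ℝ) T, Real.exp (-x ^ 2 * (T - t))
        = ∫ t in (0 : ℝ)..T, Real.exp (-x ^ 2 * (T - t)) := by
      rw [intervalIntegral.integral_of_le hT.le, integral_Ioc_eq_integral_Ioo]
    have hderivs : ∀ t ∈ Set.uIcc (0 : ℝ) T, HasDerivAt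
        (fun t : ℝ => Real.exp (-x ^ 2 * (T - t)) / x ^ 2) (Real.exp (-x ^ 2 * (T - t))) t := by
      intro t _
      have h1 : HasDerivAt (fun t : ℝ => -x ^ 2 * (T - t)) (x ^ 2) t := by
        have h0 : HasDerivAt (fun t : ℝ => T - t) (-1) t := (hasDerivAt_id t).const_sub T
        have := h0.const_mul (-x ^ 2)
        simpa using this
      have h2 := (h1.exp).div_const (x ^ 2)
      have e : Real.exp (-x ^ 2 * (T - t)) * x ^ 2 / x ^ 2 = Real.exp (-x ^ 2 * (T - t)) := by
        field_simp
      rwa [e] at h2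
    have hii : IntervalIntegrable (fun t : ℝ => Real.exp (-x ^ 2 * (T - t))) volume 0 T := by
      apply Continuous.intervalIntegrable; fun_prop
    have := intervalIntegral.integral_eq_sub_of_hasDerivAt hderivs hii
    rw [hIoo, this]
    have h0 : (0:ℝ) ≤ Real.exp (-x ^ 2 * (T - 0)) / x ^ 2 := by positivity
    have h1 : Real.exp (-x ^ 2 * (T - T)) = 1 := by simp
    rw [h1]
    linarith
  have hx0 : x ≠ 0 := by linarith
  have hfinal : ∫ t in Set.Ioo (0 : ℝ) T, (S t) ^ 2 ≤ Kn ^ 2 / (x ^ n) ^ 2 := by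
    refine hmono.trans ?_
    have e2 : ∫ t in Set.Ioo (0 : ℝ) T, Kn ^ 2 * (x / x ^ n) ^ 2 * Real.exp (-x ^ 2 * (T - t))
        = Kn ^ 2 * (x / x ^ n) ^ 2 * ∫ t in Set.Ioo (0 : ℝ) T, Real.exp (-x ^ 2 * (T - t)) := by
      rw [MeasureTheory.integral_const_mul]
    rw [e2]
    calc Kn ^ 2 * (x / x ^ n) ^ 2 * ∫ t in Set.Ioo (0 : ℝ) T, Real.exp (-x ^ 2 * (T - t))
        ≤ Kn ^ 2 * (x / x ^ n) ^ 2 * (1 / x ^ 2) := by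
          apply mul_le_mul_of_nonneg_left heval (by positivity)
      _ = Kn ^ 2 / (x ^ n) ^ 2 := by
          rw [div_pow]
          field_simp
  refine hfinal.trans ?_
  have hM1 : (1 : ℝ) ≤ (M : ℝ) := by exact_mod_cast le_trans one_le_two hM
  have hz : (M : ℝ) ^ (2 * (m : ℤ) - 5) ≤ (x ^ n) ^ 2 := by
    calc (M : ℝ) ^ (2 * (m : ℤ) - 5) ≤ (M : ℝ) ^ ((2 * n : ℕ) : ℤ) := by
          apply zpow_le_zpow_right₀ hM1
          have : (m : ℤ) = n + 1 := by exact_mod_cast hmn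
          omega
      _ = (M : ℝ) ^ (2 * n) := by rw [zpow_natCast]
      _ = ((M : ℝ) ^ n) ^ 2 := by rw [← pow_mul, Nat.mul_comm]
      _ ≤ (x ^ n) ^ 2 := by
          apply pow_le_pow_left₀ (by positivity)
          apply pow_le_pow_left₀ (by positivity) hxM
  have hzpos : (0 : ℝ) < (M : ℝ) ^ (2 * (m : ℤ) - 5) := zpow_pos hM0 _
  exact div_le_div_of_nonneg_left (by positivity) hzpos hz

/-- there is `γ₁ > 0` such that for every `M ≥ 2` one can find
`φ₁,...,φ_m` with `max|φ_i| = 1` and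
`∫₀ᵀ (Σ_{j=1}^m (GM+j) e^{-(GM+j)²(T-t)} φ_j)² dt ≤ γ₁ / M^{2m-5}`; moreover along a
strictly increasing sequence `(M_j)` the maximizing index `k₁` can be chosen
independent of `j`. -/
theorem stmt13 (m G : ℕ) (hm : 1 ≤ m) (hG : 1 ≤ G) (T : ℝ) (hT : 0 < T) :
    ∃ γ₁ > (0 : ℝ),
      (∀ M : ℕ, 2 ≤ M → ∃ φ : Fin m → ℝ,
        (∀ i, |φ i| ≤ 1) ∧ (∃ i, |φ i| = 1) ∧
        ∫ t in Set.Ioo (0 : ℝ) T,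
            (∑ j : Fin m, ((G * M + (j : ℕ) + 1 : ℕ) : ℝ) *
              Real.exp (-((G * M + (j : ℕ) + 1 : ℕ) : ℝ) ^ 2 * (T - t)) * φ j) ^ 2 ≤
          γ₁ / (M : ℝ) ^ (2 * (m : ℤ) - 5)) ∧
      ∃ (Mseq : ℕ → ℕ) (k₁ : Fin m) (φseq : ℕ → Fin m → ℝ),
        StrictMono Mseq ∧ (∀ j, 2 ≤ Mseq j) ∧
        ∀ j : ℕ,
          (∀ i, |φseq j i| ≤ 1) ∧ (∃ i, |φseq j i| = 1) ∧
          |φseq j k₁| = 1 ∧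
          ∫ t in Set.Ioo (0 : ℝ) T,
              (∑ i : Fin m, ((G * Mseq j + (i : ℕ) + 1 : ℕ) : ℝ) *
                Real.exp (-((G * Mseq j + (i : ℕ) + 1 : ℕ) : ℝ) ^ 2 * (T - t)) *
                  φseq j i) ^ 2 ≤
            γ₁ / (Mseq j : ℝ) ^ (2 * (m : ℤ) - 5) := by
  obtain ⟨n, hmn⟩ : ∃ n, m = n + 1 := ⟨m - 1, by omega⟩
  set Cmax : ℝ := (n.choose (n / 2) : ℝ) with hCmax
  have hC1 : 1 ≤ Cmax := by
    have h0 : 1 ≤ n.choose (n / 2) := Nat.choose_pos (Nat.div_le_self n 2)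
    rw [hCmax]; exact_mod_cast h0
  set φ : Fin m → ℝ := fun j =>
    ((-1 : ℝ) ^ (j : ℕ) * ((n.choose (j : ℕ) : ℝ))) / Cmax with hφ
  have habs : ∀ i : Fin m, |φ i| ≤ 1 := by
    intro i
    simp only [hφ, abs_div, abs_mul, abs_pow, abs_neg, abs_one, one_pow, one_mul]
    rw [abs_of_pos (by linarith : (0:ℝ) < Cmax), Nat.abs_cast,
      div_le_one (by linarith)]
    rw [hCmax]
    exact_mod_cast Nat.choose_le_middle (i : ℕ) n
  have hk₁lt : n / 2 < m := by omega
  set k₁ : Fin m := ⟨n / 2, hk₁lt⟩ with hk₁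
  have hmax : |φ k₁| = 1 := by
    simp only [hφ, hk₁, abs_div, abs_mul, abs_pow, abs_neg, abs_one, one_pow, one_mul,
      Nat.abs_cast]
    rw [abs_of_pos (by linarith : (0:ℝ) < Cmax)]
    rw [div_eq_one_iff_eq (by linarith : Cmax ≠ 0)]
  refine ⟨((2 * n.factorial * 5 ^ n * (n + 1) : ℝ) ^ 2), by positivity, ?_, ?_⟩
  · intro M hM
    exact ⟨φ, habs, ⟨k₁, hmax⟩, stmt13_main_est m G hm hG T hT n hmn M hM⟩
  · refine ⟨fun j => j + 2, k₁, fun _ => φ, ?_, fun j => Nat.le_add_left 2 j, ?_⟩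
    · intro a b hab
      simpa using hab
    · intro j
      exact ⟨habs, ⟨k₁, hmax⟩, hmax, stmt13_main_est m G hm hG T hT n hmn (j + 2) (Nat.le_add_left 2 j)⟩
end

section
/- Let T > 0, λ > 0 and L ∈ ℕ, and let g : [0,T] → ℝ be of class C^{L+1} with g^{(l)}(T) = 0 for every l ∈ {0,1,...,L}. Then |∫₀ᵀ e^{−λ(T−t)} g(t) dt| ≤ e^{−λT} Σ_{l=0}^{L} (sup_{[0,T]} |g^{(l)}|) / λ^{l+1} + T (sup_{[0,T]} |g^{(L+1)}|) / λ^{L+1}. -/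
open Set MeasureTheory intervalIntegral Finset

private lemma taylor_like (T : ℝ) (hT : 0 < T) (L : ℕ) (g : ℝ → ℝ)
    (hg : ContDiffOn ℝ ((L + 1 : ℕ) : ℕ∞) g (Set.Icc 0 T))
    (hder : ∀ l : ℕ, l ≤ L → iteratedDerivWithin l g (Set.Icc 0 T) T = 0)
    (M : ℝ)
    (hM : ∀ t ∈ Set.Icc (0:ℝ) T, |iteratedDerivWithin (L+1) g (Set.Icc 0 T) t| ≤ M) :
    ∀ k : ℕ, k ≤ L + 1 → ∀ t ∈ Set.Icc (0:ℝ) T,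
      |iteratedDerivWithin (L + 1 - k) g (Set.Icc 0 T) t| ≤ M * (T - t) ^ k / (k : ℕ).factorial := by
  have huniq : UniqueDiffOn ℝ (Set.Icc (0:ℝ) T) := uniqueDiffOn_Icc hT
  intro k
  induction k with
  | zero =>
    intro _ t ht
    simpa using hM t ht
  | succ k ih =>
    intro hk t ht
    set s := Set.Icc (0:ℝ) T with hs
    set j := L + 1 - (k+1) with hjdef
    have hjk : j + 1 = L + 1 - k := by omega
    have hjL : j ≤ L := by omega
    have hjlt : (j : WithTop ℕ∞) < ((L + 1 : ℕ) : ℕ∞) := by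
      exact_mod_cast Nat.lt_succ_of_le hjL
    have hdiff : DifferentiableOn ℝ (iteratedDerivWithin j g s) s :=
      hg.differentiableOn_iteratedDerivWithin hjlt huniq
    have hcont : ContinuousOn (iteratedDerivWithin j g s) s :=
      hdiff.continuousOn
    have hcont' : ContinuousOn (iteratedDerivWithin (j+1) g s) s :=
      hg.continuousOn_iteratedDerivWithin (by exact_mod_cast Nat.succ_le_of_lt (Nat.lt_succ_of_le hjL)) huniq
    have key : ∀ x ∈ Set.Ioo t T,
        HasDerivAt (iteratedDerivWithin j g s) (iteratedDerivWithin (j+1) g s x) x := by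
      intro x hx
      have hx0 : x ∈ Set.Ioo (0:ℝ) T := ⟨lt_of_le_of_lt ht.1 hx.1, hx.2⟩
      have hnx : s ∈ nhds x := Icc_mem_nhds hx0.1 hx0.2
      have hxs : x ∈ s := ⟨le_of_lt hx0.1, le_of_lt hx0.2⟩
      have hdx : DifferentiableAt ℝ (iteratedDerivWithin j g s) x :=
        (hdiff x hxs).differentiableAt hnx
      have hval : iteratedDerivWithin (j+1) g s x = deriv (iteratedDerivWithin j g s) x := by
        rw [iteratedDerivWithin_succ, derivWithin_of_mem_nhds hnx]
      rw [hval]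
      exact hdx.hasDerivAt
    have hftc : ∫ x in t..T, iteratedDerivWithin (j+1) g s x
        = iteratedDerivWithin j g s T - iteratedDerivWithin j g s t := by
      apply integral_eq_sub_of_hasDeriv_right_of_le ht.2
        (hcont.mono (Set.Icc_subset_Icc ht.1 le_rfl))
        (fun x hx => (key x hx).hasDerivWithinAt)
      apply ContinuousOn.intervalIntegrable
      rw [uIcc_of_le ht.2]
      exact hcont'.mono (Set.Icc_subset_Icc ht.1 le_rfl)
    have hT0 : iteratedDerivWithin j g s T = 0 := hder j hjL
    have heq : iteratedDerivWithin j g s t = - ∫ x in t..T, iteratedDerivWithin (j+1) g s x := by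
      rw [hftc, hT0]; ring
    have hbound : ∀ x ∈ Set.Icc t T,
        |iteratedDerivWithin (j+1) g s x| ≤ M * (T - x) ^ k / (k:ℕ).factorial := by
      intro x hx
      have hxs : x ∈ s := ⟨le_trans ht.1 hx.1, hx.2⟩
      have := ih (by omega) x hxs
      rwa [← hjk] at this
    have hint1 : IntervalIntegrable (fun x => |iteratedDerivWithin (j+1) g s x|) volume t T := by
      apply ContinuousOn.intervalIntegrable
      rw [uIcc_of_le ht.2]
      exact (hcont'.mono (Set.Icc_subset_Icc ht.1 le_rfl)).abs
    have hint2 : IntervalIntegrable (fun x => M * (T - x) ^ k / (k:ℕ).factorial) volume t T := by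
      apply Continuous.intervalIntegrable
      fun_prop
    have hcalc : (∫ x in t..T, (T - x) ^ k) = (T - t)^(k+1) / (k+1) := by
      rw [intervalIntegral.integral_comp_sub_left (fun x => x ^ k) T]
      simp [integral_pow]
    have habs : |iteratedDerivWithin j g s t| ≤ ∫ x in t..T, M * (T - x) ^ k / (k:ℕ).factorial := by
      rw [heq, abs_neg]
      calc |∫ x in t..T, iteratedDerivWithin (j+1) g s x|
          ≤ ∫ x in t..T, |iteratedDerivWithin (j+1) g s x| :=
            intervalIntegral.abs_integral_le_integral_abs ht.2
        _ ≤ ∫ x in t..T, M * (T - x) ^ k / (k:ℕ).factorial :=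
            intervalIntegral.integral_mono_on ht.2 hint1 hint2 hbound
    have hres : (∫ x in t..T, M * (T - x) ^ k / (k:ℕ).factorial)
        = M * (T - t)^(k+1) / ((k+1:ℕ)).factorial := by
      have : (fun x => M * (T - x) ^ k / (k:ℕ).factorial)
          = fun x => (M / (k:ℕ).factorial) * (T - x) ^ k := by
        funext x; ring
      rw [this, intervalIntegral.integral_const_mul, hcalc]
      have hkf : ((k:ℕ).factorial : ℝ) ≠ 0 := by positivity
      have hkf1 : (((k+1:ℕ)).factorial : ℝ) = (k+1) * (k:ℕ).factorial := by
        rw [Nat.factorial_succ]; push_cast; ring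
      rw [hkf1]
      field_simp
      try left; trivial
    rw [hres] at habs
    exact habs


/-- repeated integration by parts bound: if `g` is `C^{L+1}` on `[0,T]`
with `g^{(l)}(T) = 0` for `l = 0,...,L`, then
`|∫₀ᵀ e^{-λ(T-t)} g(t) dt| ≤ e^{-λT} Σ_{l=0}^{L} sup|g^{(l)}|/λ^{l+1}
  + T sup|g^{(L+1)}|/λ^{L+1}`. -/
theorem stmt15 (T lam : ℝ) (hT : 0 < T) (hlam : 0 < lam) (L : ℕ) (g : ℝ → ℝ)
    (hg : ContDiffOn ℝ ((L + 1 : ℕ) : ℕ∞) g (Set.Icc 0 T))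
    (hder : ∀ l : ℕ, l ≤ L → iteratedDerivWithin l g (Set.Icc 0 T) T = 0) :
    |∫ t in Set.Ioo (0 : ℝ) T, Real.exp (-lam * (T - t)) * g t| ≤
      Real.exp (-lam * T) *
          ∑ l ∈ Finset.range (L + 1),
            (⨆ t ∈ Set.Icc (0 : ℝ) T, |iteratedDerivWithin l g (Set.Icc 0 T) t|) /
              lam ^ (l + 1) +
        T * (⨆ t ∈ Set.Icc (0 : ℝ) T,
              |iteratedDerivWithin (L + 1) g (Set.Icc 0 T) t|) / lam ^ (L + 1) := by
  set s := Set.Icc (0:ℝ) T with hs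
  set M : ℝ := ⨆ t ∈ Set.Icc (0 : ℝ) T, |iteratedDerivWithin (L + 1) g (Set.Icc 0 T) t| with hMdef
  have huniq : UniqueDiffOn ℝ s := uniqueDiffOn_Icc hT
  set F : ℝ → ℝ := fun t => |iteratedDerivWithin (L + 1) g s t| with hF
  have hFc : ContinuousOn F s :=
    (hg.continuousOn_iteratedDerivWithin (by exact_mod_cast le_rfl) huniq).abs
  obtain ⟨C, hC⟩ := (isCompact_Icc.image_of_continuousOn hFc).bddAbove
  have hbdd : BddAbove (Set.range fun t => ⨆ (_ : t ∈ s), F t) := by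
    refine ⟨max C 0, ?_⟩
    rintro _ ⟨t, rfl⟩
    exact Real.iSup_le (fun h => le_max_of_le_left (hC (Set.mem_image_of_mem F h)))
      (le_max_right _ _)
  have hM0 : 0 ≤ M :=
    Real.iSup_nonneg fun t => Real.iSup_nonneg fun _ => abs_nonneg _
  have hM : ∀ t ∈ s, |iteratedDerivWithin (L + 1) g s t| ≤ M := by
    intro t ht
    calc F t = ⨆ (_ : t ∈ s), F t := (ciSup_pos (p := t ∈ s) (f := fun _ => F t) ht).symm
      _ ≤ M := le_ciSup hbdd t
  have htay : ∀ t ∈ s, |g t| ≤ M * (T - t) ^ (L + 1) / ((L+1:ℕ)).factorial := by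
    intro t ht
    have := taylor_like T hT L g hg hder M hM (L+1) le_rfl t ht
    simpa using this
  have hfact : (0:ℝ) < ((L+1:ℕ)).factorial := by positivity
  have hpt : ∀ t ∈ Set.Ioo (0:ℝ) T,
      ‖Real.exp (-lam * (T - t)) * g t‖ ≤ M / lam ^ (L + 1) := by
    intro t ht
    have hts : t ∈ s := ⟨ht.1.le, ht.2.le⟩
    have hx : 0 ≤ lam * (T - t) := by nlinarith [ht.2]
    have h1 : (lam * (T - t)) ^ (L + 1) / ((L+1:ℕ)).factorial ≤ Real.exp (lam * (T - t)) := by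
      calc (lam * (T - t)) ^ (L + 1) / ((L+1:ℕ)).factorial
          ≤ ∑ i ∈ Finset.range (L + 2), (lam * (T - t)) ^ i / (i:ℕ).factorial := by
            refine Finset.single_le_sum (f := fun i => (lam * (T-t))^i / (i:ℕ).factorial)
              (fun i _ => by positivity) ?_
            simp [Finset.mem_range]
        _ ≤ Real.exp (lam * (T - t)) := Real.sum_le_exp_of_nonneg hx _
    have key : Real.exp (-(lam * (T - t))) * ((T - t) ^ (L+1) * lam ^ (L+1))
        ≤ ((L+1:ℕ)).factorial := by
      rw [div_le_iff₀ hfact] at h1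
      have h2 : (T - t) ^ (L+1) * lam ^ (L+1)
          ≤ Real.exp (lam * (T - t)) * ((L+1:ℕ)).factorial := by
        calc (T - t) ^ (L+1) * lam ^ (L+1) = (lam * (T - t)) ^ (L+1) := by
              rw [mul_pow]; ring
          _ ≤ _ := h1
      have h3 := mul_le_mul_of_nonneg_left h2 (Real.exp_pos (-(lam * (T - t)))).le
      calc Real.exp (-(lam * (T - t))) * ((T - t) ^ (L+1) * lam ^ (L+1))
          ≤ Real.exp (-(lam * (T - t))) * (Real.exp (lam * (T - t)) * ((L+1:ℕ)).factorial) := h3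
        _ = ((L+1:ℕ)).factorial := by
            rw [← mul_assoc, ← Real.exp_add]; simp
    have hnorm : ‖Real.exp (-lam * (T - t)) * g t‖
        = Real.exp (-(lam * (T - t))) * |g t| := by
      rw [Real.norm_eq_abs, abs_mul, Real.abs_exp, neg_mul]
    rw [hnorm]
    have step1 : Real.exp (-(lam * (T - t))) * |g t|
        ≤ Real.exp (-(lam * (T - t))) * (M * (T - t) ^ (L + 1) / ((L+1:ℕ)).factorial) :=
      mul_le_mul_of_nonneg_left (htay t hts) (Real.exp_pos _).le
    refine step1.trans ?_
    rw [le_div_iff₀ (pow_pos hlam (L+1))]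
    have h4 := mul_le_mul_of_nonneg_left key (div_nonneg hM0 hfact.le)
    calc Real.exp (-(lam * (T - t))) * (M * (T - t) ^ (L + 1) / ((L+1:ℕ)).factorial) * lam ^ (L+1)
        = (M / ((L+1:ℕ)).factorial) * (Real.exp (-(lam * (T - t))) * ((T - t) ^ (L+1) * lam ^ (L+1))) := by
          ring
      _ ≤ (M / ((L+1:ℕ)).factorial) * ((L+1:ℕ)).factorial := h4
      _ = M := div_mul_cancel₀ M hfact.ne'
  have hintle : |∫ t in Set.Ioo (0 : ℝ) T, Real.exp (-lam * (T - t)) * g t|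
      ≤ T * (M / lam ^ (L + 1)) := by
    have hae : ∀ᵐ t ∂(volume.restrict (Set.Ioo (0:ℝ) T)),
        ‖Real.exp (-lam * (T - t)) * g t‖ ≤ M / lam ^ (L + 1) :=
      (ae_restrict_iff' measurableSet_Ioo).2 (Filter.Eventually.of_forall hpt)
    have h5 := MeasureTheory.norm_integral_le_of_norm_le
      (integrable_const (M / lam ^ (L + 1))) hae
    rw [Real.norm_eq_abs] at h5
    refine h5.trans ?_
    rw [MeasureTheory.setIntegral_const, measureReal_def, Real.volume_Ioo, smul_eq_mul,
      ENNReal.toReal_ofReal (by linarith)]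
    simp
  have hsum0 : 0 ≤ Real.exp (-lam * T) *
      ∑ l ∈ Finset.range (L + 1),
        (⨆ t ∈ Set.Icc (0 : ℝ) T, |iteratedDerivWithin l g (Set.Icc 0 T) t|) / lam ^ (l + 1) := by
    refine mul_nonneg (Real.exp_pos _).le (Finset.sum_nonneg fun l _ => ?_)
    exact div_nonneg (Real.iSup_nonneg fun t => Real.iSup_nonneg fun _ => abs_nonneg _)
      (pow_pos hlam _).le
  have : T * M / lam ^ (L + 1) = T * (M / lam ^ (L + 1)) := by ring
  linarith [hintle]
end

section
/- Let m ≥ 1, G ≥ 2m+1 and M ≥ 2 be integers, and define α : (0,π) → ℝ by the (uniformly convergent) series α(x) := Σ_{j=1}^∞ j^{−2} cos(Gjx). Then for all k, s ∈ {1,...,m}: ∫₀^π α(x) w_k(x) w_{GM+s}(x) dx = 1/(2M²) if s = k, and = 0 if s ≠ k. -/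
open Real

lemma intCos (t : ℤ) : ∫ x in (0:ℝ)..π, Real.cos (t * x) = if t = 0 then π else 0 := by
  by_cases ht : t = 0
  · simp [ht]
  · have ht' : (t : ℝ) ≠ 0 := by exact_mod_cast ht
    rw [if_neg ht, intervalIntegral.integral_comp_mul_left Real.cos ht', integral_cos]
    simp [Real.sin_int_mul_pi]

lemma prodEq (a b c x : ℝ) :
    Real.cos (a*x) * Real.sin (b*x) * Real.sin (c*x)
      = (Real.cos ((a - c + b)*x) + Real.cos ((a + c - b)*x)
          - Real.cos ((a - c - b)*x) - Real.cos ((a + c + b)*x)) / 4 := by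
  simp only [add_mul, sub_mul, Real.cos_add, Real.cos_sub, Real.sin_add, Real.sin_sub]
  ring

lemma icos_cont (t : ℝ) :
    IntervalIntegrable (fun x => Real.cos (t*x)) MeasureTheory.volume 0 π :=
  (Real.continuous_cos.comp (continuous_const.mul continuous_id)).intervalIntegrable 0 π

lemma termIntegral (a b c : ℤ) :
    ∫ x in (0:ℝ)..π, Real.cos (a*x) * Real.sin (b*x) * Real.sin (c*x) =
      ((if a - c + b = 0 then π else 0) + (if a + c - b = 0 then π else 0)
        - (if a - c - b = 0 then π else 0) - (if a + c + b = 0 then π else 0)) / 4 := by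
  have h : ∀ x : ℝ, Real.cos ((a:ℝ)*x) * Real.sin ((b:ℝ)*x) * Real.sin ((c:ℝ)*x)
      = (Real.cos (((a - c + b : ℤ) : ℝ)*x) + Real.cos (((a + c - b : ℤ) : ℝ)*x)
          - Real.cos (((a - c - b : ℤ) : ℝ)*x) - Real.cos (((a + c + b : ℤ) : ℝ)*x)) / 4 := by
    intro x
    push_cast
    exact prodEq _ _ _ x
  simp only [h]
  rw [intervalIntegral.integral_div,
    intervalIntegral.integral_sub (((icos_cont _).add (icos_cont _)).sub (icos_cont _)) (icos_cont _),
    intervalIntegral.integral_sub ((icos_cont _).add (icos_cont _)) (icos_cont _),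
    intervalIntegral.integral_add (icos_cont _) (icos_cont _),
    intCos, intCos, intCos, intCos]

lemma linZero (G d e : ℤ) (hG : 0 < G) (he : |e| < G) :
    G * d + e = 0 ↔ d = 0 ∧ e = 0 := by
  constructor
  · intro h
    have h1 : -G < e := (abs_lt.mp he).1
    have h2 : e < G := (abs_lt.mp he).2
    have hd : d = 0 := by
      rcases lt_trichotomy d 0 with hd | hd | hd
      · nlinarith
      · exact hd
      · nlinarith
    exact ⟨hd, by rw [hd] at h; linarith⟩
  · rintro ⟨rfl, rfl⟩; ring

/-- for `α(x) = Σ_{j≥1} j⁻² cos(Gjx)` with `G ≥ 2m+1` and `M ≥ 2`,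
`∫₀^π α w_k w_{GM+s} dx = 1/(2M²)` if `s = k` and `0` otherwise, for `k, s ∈ {1,...,m}`,
where `w_k(x) = √(2/π) sin(kx)`. -/
theorem stmt16 (m G M : ℕ) (hm : 1 ≤ m) (hG : 2 * m + 1 ≤ G) (hM : 2 ≤ M) :
    ∀ k s : ℕ, 1 ≤ k → k ≤ m → 1 ≤ s → s ≤ m →
      ∫ x in Set.Ioo (0 : ℝ) π,
          (∑' j : ℕ, (1 / ((j : ℝ) + 1) ^ 2) * Real.cos ((G : ℝ) * ((j : ℝ) + 1) * x)) *
            (Real.sqrt (2 / π) * Real.sin (k * x)) *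
            (Real.sqrt (2 / π) * Real.sin (((G * M + s : ℕ) : ℝ) * x)) =
        if s = k then 1 / (2 * (M : ℝ) ^ 2) else 0 := by
  intro k s hk1 hkm hs1 hsm
  have hπ : (0:ℝ) < π := Real.pi_pos
  have hsq : Real.sqrt (2/π) * Real.sqrt (2/π) = 2/π :=
    Real.mul_self_sqrt (by positivity)
  set F : ℕ → ℝ → ℝ := fun j x =>
    (1 / ((j : ℝ) + 1) ^ 2) * Real.cos ((G : ℝ) * ((j : ℝ) + 1) * x) *
      (Real.sqrt (2 / π) * Real.sin (k * x)) *
      (Real.sqrt (2 / π) * Real.sin (((G * M + s : ℕ) : ℝ) * x)) with hF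
  have hcont : ∀ j, Continuous (F j) := by
    intro j; rw [hF]; fun_prop
  have hInt : ∀ j, MeasureTheory.Integrable (F j)
      (MeasureTheory.volume.restrict (Set.Ioo (0:ℝ) π)) := by
    intro j
    exact ((hcont j).continuousOn.integrableOn_compact isCompact_Icc).mono_set
      Set.Ioo_subset_Icc_self
  have hbound : ∀ j x, ‖F j x‖ ≤ 2/π * (1 / ((j : ℝ) + 1) ^ 2) := by
    intro j x
    rw [hF]
    simp only [norm_mul, Real.norm_eq_abs]
    have h1 : |Real.cos ((G : ℝ) * ((j : ℝ) + 1) * x)| ≤ 1 := Real.abs_cos_le_one _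
    have h2 : |Real.sin ((k:ℝ) * x)| ≤ 1 := Real.abs_sin_le_one _
    have h3 : |Real.sin (((G * M + s : ℕ) : ℝ) * x)| ≤ 1 := Real.abs_sin_le_one _
    have h4 : |Real.sqrt (2/π)| = Real.sqrt (2/π) := abs_of_nonneg (Real.sqrt_nonneg _)
    have h5 : |1 / ((j : ℝ) + 1) ^ 2| = 1 / ((j : ℝ) + 1) ^ 2 := by
      apply abs_of_nonneg; positivity
    have h6 : (0:ℝ) ≤ Real.sqrt (2/π) := Real.sqrt_nonneg _
    have h7 : (0:ℝ) ≤ 1 / ((j : ℝ) + 1) ^ 2 := by positivity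
    rw [h4, h5]
    calc 1 / ((j : ℝ) + 1) ^ 2 * |Real.cos ((G : ℝ) * ((j : ℝ) + 1) * x)| *
          (Real.sqrt (2/π) * |Real.sin ((k:ℝ) * x)|) *
          (Real.sqrt (2/π) * |Real.sin (((G * M + s : ℕ) : ℝ) * x)|)
        ≤ 1 / ((j : ℝ) + 1) ^ 2 * 1 * (Real.sqrt (2/π) * 1) * (Real.sqrt (2/π) * 1) := by
          gcongr <;> first | positivity | assumption
      _ = 2/π * (1 / ((j : ℝ) + 1) ^ 2) := by
          simp only [mul_one]; rw [mul_assoc, hsq]; ring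
  have hSummable : Summable fun j : ℕ => (2:ℝ) * (1 / ((j : ℝ) + 1) ^ 2) := by
    apply Summable.mul_left
    have h0 : Summable (fun n : ℕ => 1 / ((n:ℝ)) ^ 2) :=
      Real.summable_one_div_nat_pow.mpr one_lt_two
    have h1 := (summable_nat_add_iff 1).mpr h0
    apply h1.congr
    intro n
    push_cast
    ring
  have hNormSum : Summable fun j : ℕ =>
      ∫ x in Set.Ioo (0:ℝ) π, ‖F j x‖ := by
    apply hSummable.of_nonneg_of_le
    · intro j
      exact MeasureTheory.integral_nonneg fun x => norm_nonneg _
    · intro j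
      calc ∫ x in Set.Ioo (0:ℝ) π, ‖F j x‖
          ≤ ∫ _x in Set.Ioo (0:ℝ) π, 2/π * (1 / ((j : ℝ) + 1) ^ 2) := by
            apply MeasureTheory.integral_mono ((hInt j).norm)
            · exact (MeasureTheory.integrableOn_const_iff).mpr (Or.inr (by
                rw [Real.volume_Ioo]; exact ENNReal.ofReal_lt_top))
            · intro x; exact hbound j x
        _ = 2 * (1 / ((j : ℝ) + 1) ^ 2) := by
            rw [MeasureTheory.setIntegral_const, Real.volume_real_Ioo_of_le (by linarith),
              smul_eq_mul]
            field_simp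
            ring
  have hswap : ∫ x in Set.Ioo (0:ℝ) π, (∑' j : ℕ, F j x)
      = ∑' j : ℕ, ∫ x in Set.Ioo (0:ℝ) π, F j x :=
    (MeasureTheory.integral_tsum_of_summable_integral_norm hInt hNormSum).symm
  have hrw : ∀ x : ℝ,
      (∑' j : ℕ, (1 / ((j : ℝ) + 1) ^ 2) * Real.cos ((G : ℝ) * ((j : ℝ) + 1) * x)) *
        (Real.sqrt (2 / π) * Real.sin (k * x)) *
        (Real.sqrt (2 / π) * Real.sin (((G * M + s : ℕ) : ℝ) * x)) = ∑' j : ℕ, F j x := by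
    intro x
    rw [hF]
    rw [tsum_mul_right, tsum_mul_right]
  rw [MeasureTheory.integral_congr_ae (Filter.Eventually.of_forall hrw), hswap]
  have hGpos : (0:ℤ) < G := by omega
  -- compute each term
  have hterm : ∀ j : ℕ, ∫ x in Set.Ioo (0:ℝ) π, F j x =
      if ((j:ℤ) + 1 = M ∧ s = k) then 1 / (2 * ((j : ℝ) + 1) ^ 2) else 0 := by
    intro j
    have hptw : ∀ x : ℝ, F j x =
        ((1 / ((j : ℝ) + 1) ^ 2) * (2/π)) *
          (Real.cos ((((G:ℤ) * ((j:ℤ)+1) : ℤ) : ℝ) * x) * Real.sin (((k:ℤ) : ℝ) * x) *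
            Real.sin ((((G : ℤ) * M + s : ℤ) : ℝ) * x)) := by
      intro x
      rw [hF]
      push_cast
      nth_rewrite 3 [← hsq]
      ring
    rw [MeasureTheory.integral_congr_ae (Filter.Eventually.of_forall hptw),
      MeasureTheory.integral_const_mul,
      ← MeasureTheory.integral_Ioc_eq_integral_Ioo,
      ← intervalIntegral.integral_of_le hπ.le,
      termIntegral ((G:ℤ) * ((j:ℤ)+1)) (k:ℤ) ((G:ℤ)*M+s)]
    -- evaluate the four conditions
    have habs1 : |(k:ℤ) - s| < G := by rw [abs_lt]; omega
    have habs2 : |(s:ℤ) - k| < G := by rw [abs_lt]; omega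
    have habs3 : |-((s:ℤ) + k)| < G := by rw [abs_lt]; omega
    have e1 : ((G:ℤ) * ((j:ℤ)+1) - ((G:ℤ)*M+s) + k = 0) ↔ ((j:ℤ) + 1 = M ∧ s = k) := by
      rw [show (G:ℤ) * ((j:ℤ)+1) - ((G:ℤ)*M+s) + k
          = (G:ℤ) * (((j:ℤ)+1) - M) + ((k:ℤ) - s) from by ring,
        linZero _ _ _ hGpos habs1]
      omega
    have e2 : ¬ ((G:ℤ) * ((j:ℤ)+1) + ((G:ℤ)*M+s) - k = 0) := by
      rw [show (G:ℤ) * ((j:ℤ)+1) + ((G:ℤ)*M+s) - k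
          = (G:ℤ) * (((j:ℤ)+1) + M) + ((s:ℤ) - k) from by ring,
        linZero _ _ _ hGpos habs2]
      omega
    have e3 : ¬ ((G:ℤ) * ((j:ℤ)+1) - ((G:ℤ)*M+s) - k = 0) := by
      rw [show (G:ℤ) * ((j:ℤ)+1) - ((G:ℤ)*M+s) - k
          = (G:ℤ) * (((j:ℤ)+1) - M) + (-((s:ℤ) + k)) from by ring,
        linZero _ _ _ hGpos habs3]
      omega
    have e4 : ¬ ((G:ℤ) * ((j:ℤ)+1) + ((G:ℤ)*M+s) + k = 0) := by
      rw [show (G:ℤ) * ((j:ℤ)+1) + ((G:ℤ)*M+s) + k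
          = (G:ℤ) * (((j:ℤ)+1) + M) + ((s:ℤ) + k) from by ring,
        linZero _ _ _ hGpos (by rw [abs_lt]; omega)]
      omega
    rw [if_neg e2, if_neg e3, if_neg e4]
    by_cases hc : ((j:ℤ) + 1 = M ∧ s = k)
    · rw [if_pos (e1.mpr hc), if_pos hc]
      field_simp
      ring
    · rw [if_neg (fun h => hc (e1.mp h)), if_neg hc]
      ring
  rw [tsum_congr hterm, tsum_eq_single (M - 1) ?_]
  · have hM1 : (((M-1:ℕ)):ℤ) + 1 = M := by omega
    have hM1' : (((M-1:ℕ)):ℝ) + 1 = M := by exact_mod_cast congrArg (Int.cast : ℤ → ℝ) hM1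
    by_cases hsk : s = k
    · rw [if_pos ⟨hM1, hsk⟩, if_pos hsk, hM1']
    · rw [if_neg (fun h => hsk h.2), if_neg hsk]
  · intro j hj
    rw [if_neg]
    rintro ⟨h1, -⟩
    exact hj (by omega)
end

section
/- Let n ≥ 1 and T > 0, let A be an n×n real matrix, B ∈ ℝⁿ, s ∈ {1,...,n}, and α₀,...,α_{s−1} ∈ ℝ with A^sB = Σ_{i=0}^{s−1} α_i A^iB. For each l ∈ {s+1,...,n}, let P_l : [0,T] → ℝⁿ be differentiable with P_l'(t) = A P_l(t) for all t ∈ [0,T]. Define P(t) as the n×n matrix whose first s columns are B, AB, ..., A^{s−1}B and whose remaining columns are P_{s+1}(t),...,P_n(t). Then for every t ∈ [0,T]: −P'(t) + A P(t) = P(t) · C, where C is the n×n block-diagonal matrix diag(C₁₁, 0) with C₁₁ the s×s matrix having ones on the subdiagonal, last column (α₀,...,α_{s−1})ᵗ and zeros elsewhere; moreover P(t)e₁ = B for all t ∈ [0,T], where e₁ is the first standard basis vector of ℝⁿ. -/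
lemma sum_dite_lt {n s : ℕ} (hsn : s ≤ n) (f : ∀ m : ℕ, m < s → ℝ) :
    (∑ k : Fin n, if h : (k : ℕ) < s then f k h else 0)
      = ∑ k : Fin s, f k k.2 := by
  have hr : ∀ k : Fin s, f k k.2 = if h : (k : ℕ) < s then f k h else 0 :=
    fun k => (dif_pos k.2).symm
  rw [Finset.sum_congr rfl (fun k _ => hr k),
      Fin.sum_univ_eq_sum_range (fun m => if h : m < s then f m h else 0),
      Fin.sum_univ_eq_sum_range (fun m => if h : m < s then f m h else 0)]
  rw [← Finset.sum_subset (Finset.range_subset_range.2 hsn)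
      (fun m _ hm => dif_neg (by simpa using hm))]

/-- with `P(t) = (B|AB|...|A^{s-1}B|P_{s+1}(t)|...|P_n(t))` where each
`P_l` solves `P_l' = A P_l`, and with `A^s B = Σ_{i<s} α_i A^i B`, one has
`−P'(t) + A P(t) = P(t) · diag(C₁₁, 0)` on `[0,T]` (entrywise derivatives), where `C₁₁`
is the companion-type matrix with subdiagonal ones and last column `(α₀,...,α_{s-1})ᵗ`;
moreover `P(t) e₁ = B` for all `t ∈ [0,T]`. -/
theorem stmt19 (n : ℕ) (hn : 1 ≤ n) (T : ℝ) (hT : 0 < T)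
    (A : Matrix (Fin n) (Fin n) ℝ) (B : Fin n → ℝ)
    (s : ℕ) (hs1 : 1 ≤ s) (hsn : s ≤ n) (α : Fin s → ℝ)
    (hcomb : (A ^ s).mulVec B = ∑ i : Fin s, α i • (A ^ (i : ℕ)).mulVec B)
    (Pcol : Fin n → ℝ → Fin n → ℝ)
    (hPcol : ∀ j : Fin n, s ≤ (j : ℕ) → ∀ t ∈ Set.Icc (0 : ℝ) T,
      HasDerivAt (Pcol j) (A.mulVec (Pcol j t)) t) :
    ∀ t ∈ Set.Icc (0 : ℝ) T,
      (∀ i j : Fin n,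
        -(deriv (fun u : ℝ =>
            if h : (j : ℕ) < s then (A ^ (j : ℕ)).mulVec B i else Pcol j u i) t) +
          (A * Matrix.of fun (i' j' : Fin n) =>
            if h : (j' : ℕ) < s then (A ^ (j' : ℕ)).mulVec B i' else Pcol j' t i') i j =
        ((Matrix.of fun (i' j' : Fin n) =>
            if h : (j' : ℕ) < s then (A ^ (j' : ℕ)).mulVec B i' else Pcol j' t i') *
          Matrix.of fun (i' j' : Fin n) =>
            if h : (i' : ℕ) < s ∧ (j' : ℕ) < s then
              (if (j' : ℕ) = s - 1 then α ⟨(i' : ℕ), h.1⟩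
              else if (i' : ℕ) = (j' : ℕ) + 1 then 1 else 0)
            else 0) i j) ∧
      (Matrix.of fun (i' j' : Fin n) =>
          if h : (j' : ℕ) < s then (A ^ (j' : ℕ)).mulVec B i' else Pcol j' t i').mulVec
        (Pi.single (⟨0, hn⟩ : Fin n) 1) = B := by
  intro t ht
  constructor
  · intro i j
    by_cases hj : (j : ℕ) < s
    · -- the column is constant, derivative is 0
      have hd : deriv (fun u : ℝ =>
          if h : (j : ℕ) < s then (A ^ (j : ℕ)).mulVec B i else Pcol j u i) t = 0 := by
        simp [hj]
      rw [hd, neg_zero, zero_add]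
      -- LHS = (A^(j+1) B) i
      have hL : (A * Matrix.of fun (i' j' : Fin n) =>
            if h : (j' : ℕ) < s then (A ^ (j' : ℕ)).mulVec B i' else Pcol j' t i') i j
          = (A ^ ((j : ℕ) + 1)).mulVec B i := by
        rw [Matrix.mul_apply]
        simp only [Matrix.of_apply, dif_pos hj]
        rw [pow_succ', ← Matrix.mulVec_mulVec]
        rfl
      rw [hL, Matrix.mul_apply]
      simp only [Matrix.of_apply]
      have : ∀ k : Fin n,
          (if h : (k : ℕ) < s then (A ^ (k : ℕ)).mulVec B i else Pcol k t i) *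
            (if h : (k : ℕ) < s ∧ (j : ℕ) < s then
              (if (j : ℕ) = s - 1 then α ⟨(k : ℕ), h.1⟩
              else if (k : ℕ) = (j : ℕ) + 1 then 1 else 0) else 0)
          = if h : (k : ℕ) < s then
              (A ^ (k : ℕ)).mulVec B i *
                (if (j : ℕ) = s - 1 then α ⟨(k : ℕ), h⟩
                else if (k : ℕ) = (j : ℕ) + 1 then 1 else 0)
            else 0 := by
        intro k
        by_cases hk : (k : ℕ) < s
        · rw [dif_pos hk, dif_pos hk, dif_pos ⟨hk, hj⟩]
        · rw [dif_neg hk, dif_neg hk, dif_neg (fun h : (k : ℕ) < s ∧ (j : ℕ) < s => hk h.1), mul_zero]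
      rw [Finset.sum_congr rfl (fun k _ => this k),
          sum_dite_lt hsn (fun m hm => (A ^ m).mulVec B i *
            (if (j : ℕ) = s - 1 then α ⟨m, hm⟩
            else if m = (j : ℕ) + 1 then 1 else 0))]
      by_cases hjs : (j : ℕ) = s - 1
      · simp only [if_pos hjs]
        have hj1 : (j : ℕ) + 1 = s := by omega
        rw [hj1, hcomb]
        simp only [Finset.sum_apply, Pi.smul_apply, smul_eq_mul]
        exact Finset.sum_congr rfl (fun k _ => by rw [mul_comm])
      · simp only [if_neg hjs]
        have hj1 : (j : ℕ) + 1 < s := by omega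
        rw [Finset.sum_eq_single ⟨(j : ℕ) + 1, hj1⟩]
        · simp
        · intro k _ hk
          have : (k : ℕ) ≠ (j : ℕ) + 1 := by
            intro h; apply hk; exact Fin.ext h
          rw [if_neg this, mul_zero]
        · intro h; exact absurd (Finset.mem_univ _) h
    · -- derivative column
      have hder : HasDerivAt (fun u : ℝ => Pcol j u i) (A.mulVec (Pcol j t) i) t := by
        have := hPcol j (le_of_not_gt hj) t ht
        exact (hasDerivAt_pi.1 this) i
      have hd : deriv (fun u : ℝ =>
          if h : (j : ℕ) < s then (A ^ (j : ℕ)).mulVec B i else Pcol j u i) t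
          = A.mulVec (Pcol j t) i := by
        simp only [dif_neg hj]
        exact hder.deriv
      rw [hd]
      have hL : (A * Matrix.of fun (i' j' : Fin n) =>
            if h : (j' : ℕ) < s then (A ^ (j' : ℕ)).mulVec B i' else Pcol j' t i') i j
          = A.mulVec (Pcol j t) i := by
        rw [Matrix.mul_apply]
        simp only [Matrix.of_apply, dif_neg hj]
        rfl
      rw [hL, neg_add_cancel, Matrix.mul_apply]
      simp only [Matrix.of_apply]
      rw [eq_comm, Finset.sum_eq_zero]
      intro k _
      rw [dif_neg (fun h : (k : ℕ) < s ∧ (j : ℕ) < s => hj h.2), mul_zero]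
  · funext i
    rw [Matrix.mulVec_single]
    simp only [Pi.smul_apply, Matrix.col_apply, op_smul_eq_mul, Matrix.of_apply, mul_one]
    rw [dif_pos (show ((⟨0, hn⟩ : Fin n) : ℕ) < s from hs1)]
    simp
end
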